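/- Let n ≥ 3, a, b ∈ ℝ, p(x,y) = y² − x³ − ax − b, Z(p) = {(x,y) ∈ ℝ² : p(x,y) = 0}, and let β be a bivariate truncated moment sequence of degree 2n satisfying β_{ij} = 0 whenever j is odd. Then β admits a Z(p)-representing measure if and only if there exists a positive Borel measure ν on ℝ with supp(ν) ⊆ {x ∈ ℝ : x³ + ax + b ≥ 0} such that β_{i, 2j} = ∫ x^i (x³ + ax + b)^j dν(x) for all i, j ≥ 0 with i + 2j ≤ 2n. -/

import Mathlib

open MeasureTheory


private lemma split_exp (n i j : ℕ) (h : i + j ≤ 2*n) :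
    ∃ i₁ i₂ k₁ k₂ : ℕ, i₁ + i₂ = i ∧ k₁ + k₂ = j ∧ i₁ + k₁ ≤ n ∧ i₂ + k₂ ≤ n := by
  refine ⟨min i n, i - min i n, min j (n - min i n), j - min j (n - min i n), ?_, ?_, ?_, ?_⟩ <;>
    omega

private lemma sqrt_pow_integrable (n : ℕ) (a b : ℝ) (ν : Measure ℝ)
    (h0 : ∀ᵐ x ∂ν, 0 ≤ x^3 + a*x + b)
    (hint : ∀ i j : ℕ, i + 2*j ≤ 2*n →
      Integrable (fun x : ℝ => x ^ i * (x^3 + a*x + b) ^ j) ν)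
    (i j : ℕ) (hij : i + j ≤ 2*n) :
    Integrable (fun x : ℝ => x ^ i * (Real.sqrt (x^3 + a*x + b)) ^ j) ν := by
  obtain ⟨i₁, i₂, k₁, k₂, hi, hk, h1, h2⟩ := split_exp n i j hij
  have hqc : Continuous fun x : ℝ => x^3 + a*x + b := by continuity
  have hsc : Continuous fun x : ℝ => Real.sqrt (x^3 + a*x + b) := Real.continuous_sqrt.comp hqc
  have key : ∀ p k : ℕ, p + k ≤ n →
      Integrable (fun x : ℝ => (x ^ p * (Real.sqrt (x^3 + a*x + b)) ^ k) ^ 2) ν := by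
    intro p k hpk
    refine (hint (2*p) k (by omega)).congr ?_
    filter_upwards [h0] with x hx
    have : (Real.sqrt (x^3 + a*x + b)) ^ (2*k) = (x^3 + a*x + b) ^ k := by
      rw [pow_mul, Real.sq_sqrt hx]
    rw [mul_pow, ← pow_mul, ← pow_mul, mul_comm p 2, mul_comm k 2, this]
  have hF := key i₁ k₁ h1
  have hG := key i₂ k₂ h2
  have hbd : Integrable (fun x : ℝ =>
      ((x ^ i₁ * (Real.sqrt (x^3 + a*x + b)) ^ k₁) ^ 2
        + (x ^ i₂ * (Real.sqrt (x^3 + a*x + b)) ^ k₂) ^ 2) / 2) ν := (hF.add hG).div_const 2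
  refine hbd.mono' (((continuous_pow i).mul (hsc.pow j)).aestronglyMeasurable) ?_
  filter_upwards [h0] with x hx
  set s := Real.sqrt (x^3 + a*x + b) with hs
  have hs0 : 0 ≤ s := Real.sqrt_nonneg _
  have habs : |x ^ i * s ^ j| = |x| ^ i * s ^ j := by
    rw [abs_mul, abs_pow, abs_of_nonneg (pow_nonneg hs0 j)]
  rw [Real.norm_eq_abs, habs]
  have hprod : |x| ^ i * s ^ j = (|x| ^ i₁ * s ^ k₁) * (|x| ^ i₂ * s ^ k₂) := by
    rw [← hi, ← hk, pow_add, pow_add]; ring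
  rw [hprod]
  have amgm : ∀ u v : ℝ, 0 ≤ u → 0 ≤ v → u * v ≤ (u^2 + v^2)/2 := by
    intro u v hu hv; nlinarith [sq_nonneg (u - v)]
  calc (|x| ^ i₁ * s ^ k₁) * (|x| ^ i₂ * s ^ k₂)
      ≤ ((|x| ^ i₁ * s ^ k₁)^2 + (|x| ^ i₂ * s ^ k₂)^2)/2 := by
        exact amgm _ _ (by positivity) (by positivity)
    _ = ((x ^ i₁ * s ^ k₁) ^ 2 + (x ^ i₂ * s ^ k₂) ^ 2) / 2 := by
        rw [mul_pow, mul_pow, mul_pow, mul_pow, ← abs_pow, sq_abs, ← abs_pow, sq_abs]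


noncomputable section

/-- `μ` is a `K`-representing measure for the degree-`d` bivariate truncated moment
sequence `β`: a positive Borel measure on `ℝ²` with `supp μ ⊆ K` (for closed `K`,
equivalently `μ(Kᶜ) = 0`) whose moments of degree ≤ `d` are the `β_{ij}`. -/
def IsRepMeasure (d : ℕ) (β : ℕ → ℕ → ℝ) (K : Set (ℝ × ℝ)) (μ : Measure (ℝ × ℝ)) : Prop :=
  μ Kᶜ = 0 ∧ ∀ i j : ℕ, i + j ≤ d →
    Integrable (fun z : ℝ × ℝ => z.1 ^ i * z.2 ^ j) μ ∧
    β i j = ∫ z : ℝ × ℝ, z.1 ^ i * z.2 ^ j ∂μ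

/-- For a symmetric degree-`2n` sequence `β` (all moments of odd degree in
`y` vanish), `β` admits a `Z(p)`-representing measure for `p = y² - x³ - ax - b` iff there
is a positive Borel measure `ν` on `ℝ` supported in `{x : x³ + ax + b ≥ 0}` with
`β_{i,2j} = ∫ x^i (x³ + ax + b)^j dν` for all `i + 2j ≤ 2n`. -/
theorem symmetric_TMP_reduction (n : ℕ) (hn : 3 ≤ n) (a b : ℝ) (β : ℕ → ℕ → ℝ)
    (hsym : ∀ i j : ℕ, i + j ≤ 2*n → Odd j → β i j = 0) :
    (∃ μ : Measure (ℝ × ℝ),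
        IsRepMeasure (2*n) β {z : ℝ × ℝ | z.2^2 - z.1^3 - a * z.1 - b = 0} μ) ↔
      (∃ ν : Measure ℝ, ν {x : ℝ | 0 ≤ x^3 + a * x + b}ᶜ = 0 ∧
        ∀ i j : ℕ, i + 2*j ≤ 2*n →
          Integrable (fun x : ℝ => x ^ i * (x^3 + a * x + b) ^ j) ν ∧
          β i (2*j) = ∫ x : ℝ, x ^ i * (x^3 + a * x + b) ^ j ∂ν) := by
  simp only [IsRepMeasure]
  have hqc : Continuous fun x : ℝ => x^3 + a*x + b := by continuity
  have hsc : Continuous fun x : ℝ => Real.sqrt (x^3 + a*x + b) := Real.continuous_sqrt.comp hqc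
  have hcurve_ms : MeasurableSet {z : ℝ × ℝ | z.2^2 - z.1^3 - a * z.1 - b = 0} :=
    measurableSet_eq_fun (by fun_prop) measurable_const
  constructor
  · rintro ⟨μ, hμ0, hμm⟩
    refine ⟨Measure.map Prod.fst μ, ?_, ?_⟩
    · rw [Measure.map_apply measurable_fst
        (((isClosed_le continuous_const hqc).measurableSet).compl)]
      refine measure_mono_null (fun z hz => ?_) hμ0
      simp only [Set.mem_preimage, Set.mem_compl_iff, Set.mem_setOf_eq, not_le] at hz ⊢
      intro hzero
      nlinarith [sq_nonneg z.2]
    · intro i j hij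
      have hae : ∀ᵐ z : ℝ × ℝ ∂μ, z.2^2 = z.1^3 + a * z.1 + b := by
        rw [ae_iff]
        refine measure_mono_null (fun z hz => ?_) hμ0
        simp only [Set.mem_setOf_eq, Set.mem_compl_iff] at hz ⊢
        intro h; exact hz (by linarith)
      obtain ⟨hint2, hval2⟩ := hμm i (2*j) (by omega)
      have heq : (fun z : ℝ × ℝ => z.1 ^ i * z.2 ^ (2*j)) =ᵐ[μ]
          (fun z : ℝ × ℝ => z.1 ^ i * (z.1^3 + a * z.1 + b) ^ j) := by
        filter_upwards [hae] with z hz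
        rw [pow_mul, hz]
      have hintc : Integrable (fun z : ℝ × ℝ => z.1 ^ i * (z.1^3 + a * z.1 + b) ^ j) μ :=
        hint2.congr heq
      have hgm : AEStronglyMeasurable (fun x : ℝ => x ^ i * (x^3 + a * x + b) ^ j)
          (Measure.map Prod.fst μ) :=
        ((continuous_pow i).mul (hqc.pow j)).aestronglyMeasurable
      constructor
      · exact (integrable_map_measure hgm measurable_fst.aemeasurable).mpr hintc
      · rw [integral_map measurable_fst.aemeasurable hgm]
        rw [hval2]
        exact integral_congr_ae heq
  · rintro ⟨ν, hν0, hν⟩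
    have hae : ∀ᵐ x ∂ν, 0 ≤ x^3 + a*x + b := by
      rw [ae_iff]
      convert hν0 using 2
      ext x; simp
    have hint : ∀ i j : ℕ, i + 2*j ≤ 2*n →
        Integrable (fun x : ℝ => x ^ i * (x^3 + a*x + b) ^ j) ν := fun i j h => (hν i j h).1
    set fp : ℝ → ℝ × ℝ := fun x => (x, Real.sqrt (x^3 + a*x + b)) with hfp
    set fm : ℝ → ℝ × ℝ := fun x => (x, -Real.sqrt (x^3 + a*x + b)) with hfm
    have hfpc : Continuous fp := continuous_id.prodMk hsc
    have hfmc : Continuous fm := continuous_id.prodMk hsc.neg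
    refine ⟨(2 : ENNReal)⁻¹ • (Measure.map fp ν + Measure.map fm ν), ?_, ?_⟩
    · have hp : Measure.map fp ν {z : ℝ × ℝ | z.2^2 - z.1^3 - a * z.1 - b = 0}ᶜ = 0 := by
        rw [Measure.map_apply hfpc.measurable hcurve_ms.compl]
        refine measure_mono_null (fun x hx => ?_) hν0
        simp only [Set.mem_preimage, Set.mem_compl_iff, Set.mem_setOf_eq, hfp] at hx ⊢
        intro h0
        exact hx (by rw [Real.sq_sqrt h0]; ring)
      have hm : Measure.map fm ν {z : ℝ × ℝ | z.2^2 - z.1^3 - a * z.1 - b = 0}ᶜ = 0 := by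
        rw [Measure.map_apply hfmc.measurable hcurve_ms.compl]
        refine measure_mono_null (fun x hx => ?_) hν0
        simp only [Set.mem_preimage, Set.mem_compl_iff, Set.mem_setOf_eq, hfm] at hx ⊢
        intro h0
        exact hx (by rw [neg_pow, Real.sq_sqrt h0]; ring)
      simp [Measure.smul_apply, Measure.add_apply, hp, hm]
    · intro i j hij
      have hgm : ∀ μ' : Measure (ℝ × ℝ),
          AEStronglyMeasurable (fun z : ℝ × ℝ => z.1 ^ i * z.2 ^ j) μ' := fun μ' =>
        ((continuous_fst.pow i).mul (continuous_snd.pow j)).aestronglyMeasurable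
      have hintp0 : Integrable (fun x : ℝ => x ^ i * (Real.sqrt (x^3 + a*x + b)) ^ j) ν :=
        sqrt_pow_integrable n a b ν hae hint i j hij
      have hintm0 : Integrable (fun x : ℝ => x ^ i * (-Real.sqrt (x^3 + a*x + b)) ^ j) ν := by
        have : (fun x : ℝ => x ^ i * (-Real.sqrt (x^3 + a*x + b)) ^ j) =
            fun x : ℝ => (-1 : ℝ) ^ j * (x ^ i * (Real.sqrt (x^3 + a*x + b)) ^ j) := by
          funext x; rw [neg_pow]; ring
        rw [this]
        exact hintp0.const_mul _
      have hintp : Integrable (fun z : ℝ × ℝ => z.1 ^ i * z.2 ^ j) (Measure.map fp ν) :=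
        (integrable_map_measure (hgm _) hfpc.measurable.aemeasurable).mpr hintp0
      have hintm : Integrable (fun z : ℝ × ℝ => z.1 ^ i * z.2 ^ j) (Measure.map fm ν) :=
        (integrable_map_measure (hgm _) hfmc.measurable.aemeasurable).mpr hintm0
      constructor
      · exact (hintp.add_measure hintm).smul_measure (by simp)
      · rw [integral_smul_measure, integral_add_measure hintp hintm,
          integral_map hfpc.measurable.aemeasurable (hgm _),
          integral_map hfmc.measurable.aemeasurable (hgm _)]
        simp only [hfp, hfm]
        rcases Nat.even_or_odd j with ⟨m, hm⟩ | hodd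
        · have hj2 : j = 2*m := by omega
          subst hj2
          have hval := (hν i m (by omega)).2
          have heqp : (fun x : ℝ => x ^ i * (Real.sqrt (x^3 + a*x + b)) ^ (2*m)) =ᵐ[ν]
              (fun x : ℝ => x ^ i * (x^3 + a*x + b) ^ m) := by
            filter_upwards [hae] with x hx
            rw [pow_mul, Real.sq_sqrt hx]
          have heqm : (fun x : ℝ => x ^ i * (-Real.sqrt (x^3 + a*x + b)) ^ (2*m)) =ᵐ[ν]
              (fun x : ℝ => x ^ i * (x^3 + a*x + b) ^ m) := by
            filter_upwards [hae] with x hx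
            rw [pow_mul, neg_pow, Real.sq_sqrt hx]
            ring_nf
          rw [integral_congr_ae heqp, integral_congr_ae heqm, ← hval]
          simp only [ENNReal.toReal_inv, smul_eq_mul]
          norm_num
          ring
        · have hval0 : β i j = 0 := hsym i j hij hodd
          have heqm : (fun x : ℝ => x ^ i * (-Real.sqrt (x^3 + a*x + b)) ^ j) =
              (fun x : ℝ => -(x ^ i * (Real.sqrt (x^3 + a*x + b)) ^ j)) := by
            funext x; rw [hodd.neg_pow]; ring
          rw [heqm, integral_neg, hval0]
          simp


end
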